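/- Let (V, ω) be a finite-dimensional symplectic vector space and N, B ⊆ V subspaces with N + B = B^ω + B. Define ω^B on N as in the stretched construction: ω^B(X₁, X₂) = ω(X₁ + b₁, X₂ + b₂) with bᵢ ∈ B, Xᵢ + bᵢ ∈ B^ω. Then the quotient N/(B ∩ N) carries a well-defined nondegenerate antisymmetric bilinear form induced by ω^B. -/

import Mathlib

open Submodule

/-- The symplectic orthogonal of a subspace `W` with respect to a bilinear form `ω`. -/
def symplOrth {K V : Type*} [Field K] [AddCommGroup V] [Module K V]
    (ω : V →ₗ[K] V →ₗ[K] K) (W : Submodule K V) : Submodule K V where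
  carrier := {v | ∀ w ∈ W, ω v w = 0}
  add_mem' := by
    intro a b ha hb w hw
    simp [map_add, ha w hw, hb w hw]
  zero_mem' := by
    intro w hw
    simp
  smul_mem' := by
    intro c a ha w hw
    simp [map_smul, ha w hw]

lemma symplOrth_eq_orthogonal {K V : Type*} [Field K] [AddCommGroup V] [Module K V]
    (ω : V →ₗ[K] V →ₗ[K] K) (hskew : ∀ v w : V, ω v w = - ω w v) (W : Submodule K V) :
    symplOrth ω W = LinearMap.BilinForm.orthogonal ω W := by
  ext v
  have h1 : v ∈ symplOrth ω W ↔ ∀ w ∈ W, ω v w = 0 := Iff.rfl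
  rw [h1, LinearMap.BilinForm.mem_orthogonal_iff]
  constructor
  · intro h n hn
    have := h n hn
    rw [hskew, neg_eq_zero] at this
    exact this
  · intro h w hw
    have := h w hw
    rw [hskew, this, neg_zero]

/-- with `N + B = B^ω + B`, the form `ω^B` on `N` descends to a
well-defined nondegenerate antisymmetric bilinear form on the quotient `N/(B ∩ N)`. -/
theorem omegaB_descends_nondegenerate
    {K V : Type*} [Field K] [AddCommGroup V] [Module K V] [FiniteDimensional K V]
    (ω : V →ₗ[K] V →ₗ[K] K)
    (hskew : ∀ v w : V, ω v w = - ω w v)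
    (hnondeg : ∀ v : V, (∀ w : V, ω v w = 0) → v = 0)
    (N B : Submodule K V)
    (hsum : N ⊔ B = symplOrth ω B ⊔ B) :
    ∃ β : ((↥N) ⧸ (comap N.subtype (B ⊓ N))) →ₗ[K]
          ((↥N) ⧸ (comap N.subtype (B ⊓ N))) →ₗ[K] K,
      -- β is induced by ω^B
      (∀ X₁ X₂ : N, ∀ b₁ ∈ B, ∀ b₂ ∈ B,
        (X₁ : V) + b₁ ∈ symplOrth ω B → (X₂ : V) + b₂ ∈ symplOrth ω B →
        β (Submodule.Quotient.mk X₁) (Submodule.Quotient.mk X₂)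
          = ω ((X₁ : V) + b₁) ((X₂ : V) + b₂)) ∧
      -- antisymmetric
      (∀ x y, β x y = - β y x) ∧
      -- nondegenerate
      (∀ x, (∀ y, β x y = 0) → x = 0) := by
  classical
  have hrefl : ω.IsRefl := fun x y h => by rw [hskew, h, neg_zero]
  have hNle : N ≤ symplOrth ω B ⊔ B := le_trans le_sup_left (le_of_eq hsum)
  -- a pair-orthogonality fact
  have hpair : ∀ d ∈ B, d ∈ symplOrth ω B → ∀ w ∈ symplOrth ω B ⊔ B, ω d w = 0 := by
    intro d hdB hdW w hw
    obtain ⟨u, hu, v, hv, rfl⟩ := mem_sup.mp hw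
    rw [map_add, hskew d u, hu d hdB, hdW v hv, neg_zero, add_zero]
  -- choose decompositions
  have hdec : ∀ X : N, ∃ u ∈ symplOrth ω B, ∃ v ∈ B, u + v = (X : V) :=
    fun X => mem_sup.mp (hNle X.2)
  choose a haw bb hbB hab using hdec
  -- independence of choice when evaluated on `symplOrth ω B ⊔ B`
  have hind : ∀ (X : N) (u : V), u ∈ symplOrth ω B → u - (X : V) ∈ B →
      ∀ w ∈ symplOrth ω B ⊔ B, ω u w = ω (a X) w := by
    intro X u huW huB w hw
    have h1 : u - a X ∈ symplOrth ω B := sub_mem huW (haw X)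
    have h2 : u - a X ∈ B := by
      have he : u - a X = (u - (X : V)) + bb X := by
        rw [← hab X]; abel
      rw [he]
      exact add_mem huB (hbB X)
    have h0 : ω (u - a X) w = 0 := hpair _ h2 h1 w hw
    rw [map_sub, LinearMap.sub_apply, sub_eq_zero] at h0
    exact h0
  -- the bilinear form on N
  set B₀ : N →ₗ[K] N →ₗ[K] K :=
    { toFun := fun X => (ω (a X)).comp N.subtype
      map_add' := by
        intro X Y
        ext Z
        have hu : a X + a Y ∈ symplOrth ω B := add_mem (haw X) (haw Y)
        have hb : (a X + a Y) - ((X + Y : N) : V) ∈ B := by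
          have he : (a X + a Y) - ((X + Y : N) : V) = -(bb X) + -(bb Y) := by
            push_cast
            rw [← hab X, ← hab Y]; abel
          rw [he]
          exact add_mem (neg_mem (hbB X)) (neg_mem (hbB Y))
        have := hind (X + Y) (a X + a Y) hu hb Z (hNle Z.2)
        simp only [map_add, LinearMap.add_apply] at this
        simp only [LinearMap.comp_apply, LinearMap.add_apply, Submodule.coe_subtype]
        rw [← this]
      map_smul' := by
        intro c X
        ext Z
        have hu : c • a X ∈ symplOrth ω B := smul_mem _ _ (haw X)
        have hb : (c • a X) - ((c • X : N) : V) ∈ B := by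
          have hx : a X - (X : V) = -(bb X) := by rw [← hab X]; abel
          have he : (c • a X) - ((c • X : N) : V) = c • (-(bb X)) := by
            rw [Submodule.coe_smul, ← smul_sub, hx]
          rw [he]
          exact smul_mem _ _ (neg_mem (hbB X))
        have := hind (c • X) (c • a X) hu hb Z (hNle Z.2)
        simp only [map_smul, LinearMap.smul_apply] at this
        simp only [LinearMap.comp_apply, LinearMap.smul_apply, Submodule.coe_subtype,
          RingHom.id_apply]
        rw [← this] } with hB₀def
  have happ : ∀ X Z : N, B₀ X Z = ω (a X) (Z : V) := fun _ _ => rfl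
  have hright : ∀ X Z : N, (Z : V) ∈ B → B₀ X Z = 0 := by
    intro X Z hZ
    rw [happ]
    exact haw X _ hZ
  have hleft : ∀ X : N, (X : V) ∈ B → ∀ Z : N, B₀ X Z = 0 := by
    intro X hX Z
    have hb : (0 : V) - (X : V) ∈ B := by simpa using neg_mem hX
    have := hind X 0 (zero_mem _) hb Z (hNle Z.2)
    rw [happ, ← this, map_zero, LinearMap.zero_apply]
  -- descend to the quotient
  set F : Submodule K N := comap N.subtype (B ⊓ N) with hFdef
  set β₁ : N →ₗ[K] ((↥N) ⧸ F) →ₗ[K] K :=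
    { toFun := fun X => F.liftQ (B₀ X)
        (fun Z hZ => LinearMap.mem_ker.mpr (hright X Z (mem_comap.mp hZ).1))
      map_add' := by
        intro X Y
        refine LinearMap.ext fun z => ?_
        obtain ⟨Z, rfl⟩ := Submodule.Quotient.mk_surjective F z
        simp [Submodule.liftQ_apply]
      map_smul' := by
        intro c X
        refine LinearMap.ext fun z => ?_
        obtain ⟨Z, rfl⟩ := Submodule.Quotient.mk_surjective F z
        simp [Submodule.liftQ_apply] } with hβ₁def
  have hβ₁ker : F ≤ LinearMap.ker β₁ := by
    intro X hX
    refine LinearMap.mem_ker.mpr (LinearMap.ext fun z => ?_)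
    obtain ⟨Z, rfl⟩ := Submodule.Quotient.mk_surjective F z
    have : β₁ X (Submodule.Quotient.mk Z) = B₀ X Z := rfl
    rw [this, hleft X (mem_comap.mp hX).1 Z, LinearMap.zero_apply]
  refine ⟨F.liftQ β₁ hβ₁ker, ?_, ?_, ?_⟩
  · -- induced by ω^B
    intro X₁ X₂ b₁ hb₁ b₂ hb₂ h₁ h₂
    have hβmk : F.liftQ β₁ hβ₁ker (Submodule.Quotient.mk X₁) (Submodule.Quotient.mk X₂)
        = ω (a X₁) (X₂ : V) := rfl
    rw [hβmk]
    have hb : ((X₁ : V) + b₁) - (X₁ : V) ∈ B := by simpa using hb₁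
    have h3 : ω ((X₁ : V) + b₁) (X₂ : V) = ω (a X₁) (X₂ : V) :=
      hind X₁ _ h₁ hb X₂ (hNle X₂.2)
    have h4 : ω ((X₁ : V) + b₁) ((X₂ : V) + b₂)
        = ω ((X₁ : V) + b₁) (X₂ : V) + ω ((X₁ : V) + b₁) b₂ := map_add _ _ _
    rw [h4, h₁ b₂ hb₂, add_zero, h3]
  · -- antisymmetric
    intro x y
    obtain ⟨X, rfl⟩ := Submodule.Quotient.mk_surjective F x
    obtain ⟨Y, rfl⟩ := Submodule.Quotient.mk_surjective F y
    have hXY : F.liftQ β₁ hβ₁ker (Submodule.Quotient.mk X) (Submodule.Quotient.mk Y)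
        = ω (a X) (Y : V) := rfl
    have hYX : F.liftQ β₁ hβ₁ker (Submodule.Quotient.mk Y) (Submodule.Quotient.mk X)
        = ω (a Y) (X : V) := rfl
    rw [hXY, hYX]
    have e1 : ω (a X) (Y : V) = ω (a X) (a Y) := by
      rw [← hab Y, map_add, haw X _ (hbB Y), add_zero]
    have e2 : ω (a Y) (X : V) = ω (a Y) (a X) := by
      rw [← hab X, map_add, haw Y _ (hbB X), add_zero]
    rw [e1, e2, hskew]
  · -- nondegenerate
    intro x hx
    obtain ⟨X, rfl⟩ := Submodule.Quotient.mk_surjective F x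
    have hN0 : ∀ Z : N, ω (a X) (Z : V) = 0 := by
      intro Z
      have := hx (Submodule.Quotient.mk Z)
      exact this
    have hBw0 : ∀ w ∈ symplOrth ω B, ω (a X) w = 0 := by
      intro w hw
      have hw' : w ∈ N ⊔ B := by rw [hsum]; exact mem_sup_left hw
      obtain ⟨n, hn, v, hv, rfl⟩ := mem_sup.mp hw'
      rw [map_add, hN0 ⟨n, hn⟩, haw X v hv, add_zero]
    have haB : a X ∈ B := by
      have hmem : a X ∈ symplOrth ω (symplOrth ω B) := fun w hw => hBw0 w hw
      rw [symplOrth_eq_orthogonal ω hskew, symplOrth_eq_orthogonal ω hskew,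
        LinearMap.BilinForm.orthogonal_orthogonal (hrefl.nondegenerate_iff_separatingLeft.mpr hnondeg) hrefl] at hmem
      exact hmem
    have hXB : (X : V) ∈ B := by
      rw [← hab X]
      exact add_mem haB (hbB X)
    exact (Submodule.Quotient.mk_eq_zero F).mpr (mem_comap.mpr ⟨hXB, X.2⟩)
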